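/- For every integer p ≥ 3 and every β_0 with β*(p) < β_0 < log 2, there exists B > β_0 such that for all β > B: H_{β_0,p}(m_*(β,p)) < 0, and consequently sup_{x ∈ η_p^{−1}((β,∞))} H_{β_0,p}(x) = 0 > sup_{x ∈ (m_*(β,p), 1]} H_{β_0,p}(x); that is, for null parameters strictly between β*(p) and log 2 and all sufficiently large alternatives, the maximum pseudolikelihood test has strictly smaller Bahadur slope than the maximum likelihood test. -/

import Mathlib

open Real Set Filter

/-- `I(x) = ½[(1+x)log(1+x) + (1−x)log(1−x)]` (with `Real.log 0 = 0`). -/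
noncomputable def bahI (x : ℝ) : ℝ :=
  ((1 + x) * Real.log (1 + x) + (1 - x) * Real.log (1 - x)) / 2

/-- `H_{β,p}(x) = β xᵖ − I(x)`. -/
noncomputable def bahH (β : ℝ) (p : ℕ) (x : ℝ) : ℝ := β * x ^ p - bahI x

/-- `β*(p) = sup {β ≥ 0 : sup_{x∈[−1,1]} H_{β,p}(x) = 0}`. -/
noncomputable def betaStar (p : ℕ) : ℝ :=
  sSup {β : ℝ | 0 ≤ β ∧ sSup (bahH β p '' Set.Icc (-1 : ℝ) 1) = 0}

/-- inverse hyperbolic tangent. -/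
noncomputable def arctanh (x : ℝ) : ℝ := Real.log ((1 + x) / (1 - x)) / 2

/-- `η_p(t) = p⁻¹ t^{1−p} arctanh t` for `t ≠ 0`, and `η_p(0) = 0`. -/
noncomputable def etaFn (p : ℕ) (t : ℝ) : ℝ :=
  if t = 0 then 0 else (p : ℝ)⁻¹ * t ^ (1 - (p : ℤ)) * arctanh t

/-- 2x ≤ log(1+x) − log(1−x) on [0,1). -/
lemma bah_log_ge (x : ℝ) (hx : x ∈ Set.Ico (0:ℝ) 1) :
    2 * x ≤ Real.log (1 + x) - Real.log (1 - x) := by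
  set F : ℝ → ℝ := fun x => Real.log (1 + x) - Real.log (1 - x) - 2 * x with hF
  have key : ∀ y ∈ Set.Ico (0:ℝ) 1, HasDerivAt F (1/(1+y) - (0-1)/(1-y) - 2) y := by
    intro y hy
    have h1 : (0:ℝ) < 1 + y := by nlinarith [hy.1]
    have h2 : (0:ℝ) < 1 - y := by nlinarith [hy.2]
    have d1 : HasDerivAt (fun x : ℝ => Real.log (1 + x)) (1/(1+y)) y := by
      simpa using (((hasDerivAt_id y).const_add 1).log h1.ne')
    have d2 : HasDerivAt (fun x : ℝ => Real.log (1 - x)) ((0-1)/(1-y)) y :=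
      ((hasDerivAt_const y (1:ℝ)).sub (hasDerivAt_id y)).log h2.ne'
    have d3 : HasDerivAt (fun x : ℝ => 2 * x) 2 y := by
      simpa using (hasDerivAt_id y).const_mul 2
    exact (d1.sub d2).sub d3
  have mono : MonotoneOn F (Set.Ico (0:ℝ) 1) := by
    have hint : interior (Set.Ico (0:ℝ) 1) = Set.Ioo 0 1 := interior_Ico
    apply monotoneOn_of_deriv_nonneg (convex_Ico 0 1)
    · exact fun y hy => ((key y hy).continuousAt).continuousWithinAt
    · rw [hint]
      exact fun y hy =>
        ((key y (Set.Ioo_subset_Ico_self hy)).differentiableAt).differentiableWithinAt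
    · rw [hint]; intro y hy
      rw [(key y (Set.Ioo_subset_Ico_self hy)).deriv]
      have h1 : (0:ℝ) < 1 + y := by nlinarith [hy.1]
      have h2 : (0:ℝ) < 1 - y := by nlinarith [hy.2]
      have : 1/(1+y) - (0-1)/(1-y) - 2 = 2*y^2/((1+y)*(1-y)) := by field_simp; ring
      rw [this]; positivity
  have h0 : F 0 = 0 := by simp [hF]
  have := mono (by constructor <;> norm_num : (0:ℝ) ∈ Set.Ico (0:ℝ) 1) hx hx.1
  rw [h0] at this
  simpa [hF, sub_nonneg] using this

/-- arctanh x ≥ x on [0,1). -/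
lemma bah_arctanh_ge (x : ℝ) (hx : x ∈ Set.Ico (0:ℝ) 1) : x ≤ arctanh x := by
  have h1 : (0:ℝ) < 1 + x := by nlinarith [hx.1]
  have h2 : (0:ℝ) < 1 - x := by nlinarith [hx.2]
  have := bah_log_ge x hx
  rw [arctanh, Real.log_div h1.ne' h2.ne']
  linarith

/-- x² ≤ (1+x)log(1+x) + (1−x)log(1−x) on [0,1). -/
lemma bah_quad_aux (x : ℝ) (hx : x ∈ Set.Ico (0:ℝ) 1) :
    x ^ 2 ≤ (1 + x) * Real.log (1 + x) + (1 - x) * Real.log (1 - x) := by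
  set G : ℝ → ℝ := fun x => (1 + x) * Real.log (1 + x) + (1 - x) * Real.log (1 - x) - x ^ 2
    with hG
  have key : ∀ y ∈ Set.Ico (0:ℝ) 1,
      HasDerivAt G (Real.log (1 + y) - Real.log (1 - y) - 2 * y) y := by
    intro y hy
    have h1 : (0:ℝ) < 1 + y := by nlinarith [hy.1]
    have h2 : (0:ℝ) < 1 - y := by nlinarith [hy.2]
    have a1 : HasDerivAt (fun x : ℝ => 1 + x) 1 y := (hasDerivAt_id y).const_add 1
    have a2 : HasDerivAt (fun x : ℝ => 1 - x) (0-1) y :=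
      (hasDerivAt_const y (1:ℝ)).sub (hasDerivAt_id y)
    have d1 : HasDerivAt (fun x : ℝ => (1 + x) * Real.log (1 + x))
        (1 * Real.log (1 + y) + (1 + y) * (1/(1+y))) y := a1.mul (a1.log h1.ne')
    have d2 : HasDerivAt (fun x : ℝ => (1 - x) * Real.log (1 - x))
        ((0-1) * Real.log (1 - y) + (1 - y) * ((0-1)/(1-y))) y := a2.mul (a2.log h2.ne')
    have d3 : HasDerivAt (fun x : ℝ => x ^ 2) (2 * y) y := by
      simpa using hasDerivAt_pow 2 y
    have := (d1.add d2).sub d3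
    have e1 : (1 + y) * (1 / (1 + y)) = 1 := mul_one_div_cancel h1.ne'
    have e2 : (1 - y) * ((0 - 1) / (1 - y)) = 0 - 1 := by
      rw [mul_div_assoc', mul_div_cancel_left₀ _ h2.ne']
    exact this.congr_deriv (by rw [e1, e2]; ring)
  have mono : MonotoneOn G (Set.Ico (0:ℝ) 1) := by
    have hint : interior (Set.Ico (0:ℝ) 1) = Set.Ioo 0 1 := interior_Ico
    apply monotoneOn_of_deriv_nonneg (convex_Ico 0 1)
    · exact fun y hy => ((key y hy).continuousAt).continuousWithinAt
    · rw [hint]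
      exact fun y hy =>
        ((key y (Set.Ioo_subset_Ico_self hy)).differentiableAt).differentiableWithinAt
    · rw [hint]; intro y hy
      rw [(key y (Set.Ioo_subset_Ico_self hy)).deriv]
      have := bah_log_ge y (Set.Ioo_subset_Ico_self hy)
      linarith
  have h0 : G 0 = 0 := by simp [hG]
  have := mono (by constructor <;> norm_num : (0:ℝ) ∈ Set.Ico (0:ℝ) 1) hx hx.1
  rw [h0] at this
  simpa [hG, sub_nonneg] using this

lemma bahI_even (x : ℝ) : bahI (-x) = bahI x := by
  have h1 : (1:ℝ) + -x = 1 - x := by ring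
  have h2 : (1:ℝ) - -x = 1 + x := by ring
  rw [bahI, bahI, h1, h2]; ring

/-- I(x) ≥ x²/2 on [−1,1]. -/
lemma bahI_ge_sq (x : ℝ) (hx : x ∈ Set.Icc (-1:ℝ) 1) : x ^ 2 / 2 ≤ bahI x := by
  have key : ∀ y ∈ Set.Icc (0:ℝ) 1, y ^ 2 / 2 ≤ bahI y := by
    intro y hy
    rcases eq_or_lt_of_le hy.2 with h | h
    · subst h
      have h2 : bahI 1 = Real.log 2 := by norm_num [bahI]
      rw [h2]; nlinarith [Real.log_two_gt_d9]
    · have := bah_quad_aux y ⟨hy.1, h⟩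
      rw [bahI]; linarith
  rcases le_total 0 x with h | h
  · exact key x ⟨h, hx.2⟩
  · have := key (-x) ⟨by linarith, by linarith [hx.1]⟩
    rw [bahI_even] at this
    calc x ^ 2 / 2 = (-x) ^ 2 / 2 := by ring
    _ ≤ bahI x := this

lemma bahI_cont : Continuous bahI := by
  have h : Continuous fun x : ℝ => x * Real.log x := Real.continuous_mul_log
  have h1 : Continuous fun x : ℝ => (1 + x) * Real.log (1 + x) :=
    h.comp (continuous_const.add continuous_id)
  have h2 : Continuous fun x : ℝ => (1 - x) * Real.log (1 - x) :=
    h.comp (continuous_const.sub continuous_id)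
  exact (h1.add h2).div_const 2

lemma bahI_one : bahI 1 = Real.log 2 := by norm_num [bahI]

lemma bahI_nonneg (x : ℝ) (hx : x ∈ Set.Icc (-1:ℝ) 1) : 0 ≤ bahI x := by
  have := bahI_ge_sq x hx; nlinarith

lemma bahI_le_log_two (x : ℝ) (hx : x ∈ Set.Icc (-1:ℝ) 1) : bahI x ≤ Real.log 2 := by
  have l2 : (0:ℝ) < Real.log 2 := Real.log_pos (by norm_num)
  have key : ∀ y : ℝ, 0 ≤ y → y ≤ 1 → bahI y ≤ Real.log 2 := by
    intro y h0 h1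
    have ha : (1 + y) * Real.log (1 + y) ≤ 2 * Real.log 2 := by
      have e1 : Real.log (1 + y) ≤ Real.log 2 :=
        Real.log_le_log (by linarith) (by linarith)
      have e0 : 0 ≤ Real.log (1 + y) := Real.log_nonneg (by linarith)
      nlinarith
    have hb : (1 - y) * Real.log (1 - y) ≤ 0 := by
      rcases eq_or_lt_of_le h1 with h | h
      · rw [← h]; norm_num
      · have : Real.log (1 - y) ≤ 0 := Real.log_nonpos (by linarith) (by linarith)
        nlinarith
    rw [bahI]; linarith
  rcases le_total 0 x with h | h
  · exact key x h hx.2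
  · rw [← bahI_even]; exact key (-x) (by linarith) (by linarith [hx.1])

lemma bahI_le_self (t : ℝ) (h0 : 0 ≤ t) (h1 : t < 1) : bahI t ≤ t := by
  have ha : Real.log (1 + t) ≤ t := by
    have := Real.log_le_sub_one_of_pos (show (0:ℝ) < 1 + t by linarith)
    linarith
  have ha' : (1 + t) * Real.log (1 + t) ≤ (1 + t) * t := by
    apply mul_le_mul_of_nonneg_left ha (by linarith)
  have hb : (1 - t) * Real.log (1 - t) ≤ 0 := by
    have : Real.log (1 - t) ≤ 0 := Real.log_nonpos (by linarith) (by linarith)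
    nlinarith
  rw [bahI]; nlinarith

lemma arctanh_nonneg (x : ℝ) (h0 : 0 ≤ x) (h1 : x < 1) : 0 ≤ arctanh x := by
  rw [arctanh]
  have : (1:ℝ) ≤ (1 + x) / (1 - x) := by
    rw [le_div_iff₀ (by linarith)]; linarith
  have := Real.log_nonneg this
  linarith

lemma arctanh_abs_le (t ε : ℝ) (hε : ε < 1) (ht : |t| ≤ ε) : |arctanh t| ≤ arctanh ε := by
  have hε0 : 0 ≤ ε := le_trans (abs_nonneg t) ht
  have ht1 : -ε ≤ t := neg_le_of_abs_le ht
  have ht2 : t ≤ ε := le_of_abs_le ht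
  have p1 : (0:ℝ) < 1 - ε := by linarith
  have p2 : (0:ℝ) < 1 - t := by linarith
  have p3 : (0:ℝ) < 1 + t := by linarith
  have p4 : (0:ℝ) < 1 + ε := by linarith
  have hup : arctanh t ≤ arctanh ε := by
    rw [arctanh, arctanh]
    have : (1 + t) / (1 - t) ≤ (1 + ε) / (1 - ε) := by
      rw [div_le_div_iff₀ p2 p1]; nlinarith
    have := Real.log_le_log (by positivity) this
    linarith
  have hlo : -arctanh ε ≤ arctanh t := by
    rw [arctanh, arctanh]
    have h5 : (1 - ε) / (1 + ε) ≤ (1 + t) / (1 - t) := by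
      rw [div_le_div_iff₀ p4 p2]; nlinarith
    have h6 := Real.log_le_log (by positivity) h5
    have h7 : Real.log ((1 - ε) / (1 + ε)) = - Real.log ((1 + ε) / (1 - ε)) := by
      rw [← Real.log_inv, inv_div]
    rw [h7] at h6
    linarith
  exact abs_le.2 ⟨hlo, hup⟩

lemma bahH_cont (β : ℝ) (p : ℕ) : Continuous (bahH β p) :=
  (continuous_const.mul (continuous_pow p)).sub bahI_cont

lemma betaStar_nonneg (p : ℕ) : 0 ≤ betaStar p := by
  set S := {β : ℝ | 0 ≤ β ∧ sSup (bahH β p '' Set.Icc (-1 : ℝ) 1) = 0} with hS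
  have h0 : (0:ℝ) ∈ S := by
    refine ⟨le_refl 0, ?_⟩
    apply IsGreatest.csSup_eq
    constructor
    · exact ⟨0, by norm_num, by norm_num [bahH, bahI]⟩
    · rintro y ⟨x, hx, rfl⟩
      have := bahI_nonneg x hx
      simp only [bahH]
      nlinarith
  have hb : BddAbove S := by
    refine ⟨Real.log 2, ?_⟩
    rintro β ⟨hβ0, hβs⟩
    have hmem : bahH β p 1 ∈ bahH β p '' Set.Icc (-1 : ℝ) 1 :=
      ⟨1, by norm_num, rfl⟩
    have hbb : BddAbove (bahH β p '' Set.Icc (-1 : ℝ) 1) :=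
      (isCompact_Icc.image (bahH_cont β p)).bddAbove
    have := le_csSup hbb hmem
    rw [hβs] at this
    have h1 : bahH β p 1 = β - Real.log 2 := by simp [bahH, bahI_one]
    rw [h1] at this; linarith
  exact le_csSup hb h0

lemma eta_repr (p : ℕ) (hp : 1 ≤ p) (t : ℝ) (ht : t ≠ 0) :
    etaFn p t = (p:ℝ)⁻¹ * (t ^ (p-1))⁻¹ * arctanh t := by
  rw [etaFn, if_neg ht]
  have h1 : (1 : ℤ) - (p:ℤ) = -(((p-1:ℕ)):ℤ) := by omega
  rw [h1, zpow_neg, zpow_natCast]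


set_option maxHeartbeats 1000000 in
/-- For `p ≥ 3` and `β*(p) < β₀ < log 2`, there is `B > β₀` such that for all `β > B`,
writing `m = m_*(β,p)` for the positive global maximizer of `H_{β,p}` on `[−1,1]`:
`H_{β₀,p}(m) < 0`, and consequently
`sup_{x ∈ η_p⁻¹((β,∞))} H_{β₀,p}(x) = 0 > sup_{x ∈ (m, 1]} H_{β₀,p}(x)`. -/
theorem statement10 (p : ℕ) (hp : 3 ≤ p) (β₀ : ℝ) (h0 : betaStar p < β₀)
    (h1 : β₀ < Real.log 2) :
    ∃ B, β₀ < B ∧ ∀ β, B < β →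
      ∀ m : ℝ, 0 < m → m ∈ Set.Icc (-1 : ℝ) 1 →
        IsMaxOn (bahH β p) (Set.Icc (-1 : ℝ) 1) m →
          bahH β₀ p m < 0 ∧
          sSup (bahH β₀ p '' {t ∈ Set.Icc (-1 : ℝ) 1 | β < etaFn p t}) = 0 ∧
          sSup (bahH β₀ p '' Set.Ioc m 1) < 0 := by
  have hβ0 : 0 < β₀ := lt_of_le_of_lt (betaStar_nonneg p) h0
  have hppos : (0:ℝ) < (p:ℝ) := by exact_mod_cast (by omega : 0 < p)
  set k := p - 1 with hk
  have hk2 : 2 ≤ k := by omega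
  have hp1 : 1 ≤ p := by omega
  -- δ : inner radius
  set δ : ℝ := min (1/4) (1/(4*β₀)) with hδdef
  have hδpos : 0 < δ := by
    apply lt_min (by norm_num); positivity
  have hδle : δ ≤ 1/4 := min_le_left _ _
  have hδβ : β₀ * δ ≤ 1/4 := by
    have h := min_le_right (1/4 : ℝ) (1/(4*β₀))
    calc β₀ * δ ≤ β₀ * (1/(4*β₀)) := by
          apply mul_le_mul_of_nonneg_left h hβ0.le
    _ = 1/4 := by field_simp
  -- ε : outer radius, via continuity of bahI at 1
  have hopen : IsOpen {x : ℝ | β₀ < bahI x} := isOpen_lt continuous_const bahI_cont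
  have h1mem : (1:ℝ) ∈ {x : ℝ | β₀ < bahI x} := by
    simp only [mem_setOf_eq, bahI_one]; exact h1
  obtain ⟨r, hr, hball⟩ := Metric.isOpen_iff.1 hopen 1 h1mem
  set ε : ℝ := max (1/2) (1 - r/2) with hεdef
  have hεhalf : (1/2 : ℝ) ≤ ε := le_max_left _ _
  have hε0 : (0:ℝ) < ε := by linarith
  have hε1 : ε < 1 := by
    apply max_lt (by norm_num); linarith
  have hIε : ∀ t ∈ Set.Icc ε 1, β₀ < bahI t := by
    intro t ht
    apply hball
    rw [Metric.mem_ball, Real.dist_eq, abs_sub_comm, abs_of_nonneg (by linarith [ht.2])]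
    have : 1 - r/2 ≤ ε := le_max_right _ _
    linarith [ht.1]
  -- minimum of bahI on [ε, 1]
  obtain ⟨xc, hxc, hxcmin'⟩ := isCompact_Icc.exists_isMinOn
    (nonempty_Icc.2 hε1.le) bahI_cont.continuousOn
  have hxcmin : ∀ y ∈ Set.Icc ε 1, bahI xc ≤ bahI y := fun y hy => hxcmin' hy
  set c : ℝ := bahI xc with hcdef
  have hc : β₀ < c := hIε xc hxc
  -- H β₀ on the outer region
  have houter : ∀ t : ℝ, t ∈ Set.Icc (-1:ℝ) 1 → ε ≤ |t| → bahH β₀ p t ≤ β₀ - c := by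
    intro t ht hεt
    have habs : |t| ≤ 1 := abs_le.2 ⟨ht.1, ht.2⟩
    have h2 : t ^ p ≤ 1 := by
      calc t ^ p ≤ |t ^ p| := le_abs_self _
      _ = |t| ^ p := abs_pow t p
      _ ≤ 1 := pow_le_one₀ (abs_nonneg t) habs
    have h3 : bahI t = bahI |t| := by
      rcases le_total 0 t with h | h
      · rw [abs_of_nonneg h]
      · rw [abs_of_nonpos h, bahI_even]
    have h4 : c ≤ bahI |t| := hxcmin |t| ⟨hεt, habs⟩
    rw [bahH, h3]
    nlinarith
  have houtneg : β₀ - c < 0 := by linarith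
  -- H β₀ on the inner region
  have hinner : ∀ t : ℝ, |t| ≤ δ → bahH β₀ p t ≤ 0 := by
    intro t ht
    have habs : |t| ≤ 1 := by linarith [hδle]
    have h2 : t ^ p ≤ |t| ^ 3 := by
      calc t ^ p ≤ |t ^ p| := le_abs_self _
      _ = |t| ^ p := abs_pow t p
      _ ≤ |t| ^ 3 := pow_le_pow_of_le_one (abs_nonneg t) habs hp
    have h3 : |t| ≤ 1 := habs
    have h4 : t ^ 2 / 2 ≤ bahI t := bahI_ge_sq t (abs_le.1 habs)
    have h5 : |t| ^ 3 = |t| * t ^ 2 := by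
      rw [pow_succ' |t| 2, sq_abs]
    have h6 : β₀ * |t| ≤ 1/4 := by
      calc β₀ * |t| ≤ β₀ * δ := mul_le_mul_of_nonneg_left ht hβ0.le
      _ ≤ 1/4 := hδβ
    rw [bahH]
    have h7 : β₀ * t ^ p ≤ β₀ * (|t| * t ^ 2) := by
      rw [← h5]; exact mul_le_mul_of_nonneg_left h2 hβ0.le
    nlinarith [sq_nonneg t, abs_nonneg t]
  -- eta on the middle region
  set B₁ : ℝ := (p:ℝ)⁻¹ * (δ ^ k)⁻¹ * arctanh ε with hB₁def
  have hmid : ∀ t : ℝ, δ ≤ |t| → |t| ≤ ε → etaFn p t ≤ B₁ := by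
    intro t ht1 ht2
    have ht0 : t ≠ 0 := by
      intro h; rw [h] at ht1; simp at ht1; linarith
    rw [eta_repr p hp1 t ht0, ← hk]
    have e1 : (t ^ k)⁻¹ * arctanh t ≤ (δ ^ k)⁻¹ * arctanh ε := by
      have a1 : (t ^ k)⁻¹ * arctanh t ≤ |(t ^ k)⁻¹ * arctanh t| := le_abs_self _
      have a2 : |(t ^ k)⁻¹ * arctanh t| = (|t| ^ k)⁻¹ * |arctanh t| := by
        rw [abs_mul, abs_inv, abs_pow]
      have a3 : (|t| ^ k)⁻¹ ≤ (δ ^ k)⁻¹ := by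
        apply inv_anti₀ (by positivity)
        exact pow_le_pow_left₀ hδpos.le ht1 k
      have a4 : |arctanh t| ≤ arctanh ε := arctanh_abs_le t ε hε1 ht2
      calc (t ^ k)⁻¹ * arctanh t ≤ (|t| ^ k)⁻¹ * |arctanh t| := by rw [← a2]; exact a1
      _ ≤ (δ ^ k)⁻¹ * arctanh ε :=
        mul_le_mul a3 a4 (abs_nonneg _) (by positivity)
    calc (p:ℝ)⁻¹ * (t ^ k)⁻¹ * arctanh t = (p:ℝ)⁻¹ * ((t ^ k)⁻¹ * arctanh t) := by ring
    _ ≤ (p:ℝ)⁻¹ * ((δ ^ k)⁻¹ * arctanh ε) := by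
        apply mul_le_mul_of_nonneg_left e1 (by positivity)
    _ = B₁ := by rw [hB₁def]; ring
  -- ε' and B₂
  set ε' : ℝ := (1 + ε)/2 with hε'def
  have hεε' : ε < ε' := by rw [hε'def]; linarith
  have hε'1 : ε' < 1 := by rw [hε'def]; linarith
  have hd : 0 < ε' ^ p - ε ^ p := by
    have := pow_lt_pow_left₀ hεε' hε0.le (by omega : p ≠ 0)
    linarith
  set B₂ : ℝ := Real.log 2 / (ε' ^ p - ε ^ p) with hB₂def
  refine ⟨max (max (β₀ + 1) B₁) B₂, ?_, ?_⟩
  · calc β₀ < β₀ + 1 := by linarith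
    _ ≤ max (β₀ + 1) B₁ := le_max_left _ _
    _ ≤ _ := le_max_left _ _
  intro β hβ m hm0 hmIcc hmax
  have hβB₁ : B₁ < β := lt_of_le_of_lt (le_trans (le_max_right _ _) (le_max_left _ _)) hβ
  have hβB₂ : B₂ < β := lt_of_le_of_lt (le_max_right _ _) hβ
  have hββ₀ : β₀ + 1 < β :=
    lt_of_le_of_lt (le_trans (le_max_left _ _) (le_max_left _ _)) hβ
  have hβpos : 0 < β := by linarith
  -- Step 1 : ε < m
  have hmε : ε < m := by
    by_contra hcon
    push_neg at hcon
    have hmax' := hmax (show ε' ∈ Set.Icc (-1:ℝ) 1 by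
      constructor <;> [linarith; linarith])
    simp only [bahH, mem_setOf_eq] at hmax'
    have i1 : bahI ε' ≤ Real.log 2 := bahI_le_log_two ε' ⟨by linarith, hε'1.le⟩
    have i2 : 0 ≤ bahI m := bahI_nonneg m hmIcc
    have i3 : m ^ p ≤ ε ^ p := pow_le_pow_left₀ hm0.le hcon p
    have i4 : β * (ε' ^ p - ε ^ p) ≤ Real.log 2 := by nlinarith [mul_le_mul_of_nonneg_left i3 hβpos.le]
    have i5 : β ≤ B₂ := by
      rw [hB₂def, le_div_iff₀ hd]; linarith
    linarith
  -- Step 2 : m < 1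
  have hm1 : m < 1 := by
    rcases lt_or_eq_of_le hmIcc.2 with h | h
    · exact h
    have hexp : (0:ℝ) < Real.exp (-(2 * β * p + 1)) := Real.exp_pos _
    set hh : ℝ := Real.exp (-(2 * β * p + 1)) with hhdef
    have hhhalf : hh < 1/2 := by
      have e1 : hh ≤ Real.exp (-1) := by
        apply Real.exp_le_exp.2
        have : (0:ℝ) ≤ β * p := by positivity
        linarith
      have e2 : Real.exp (-1) < 1/2 := by
        have h2 : (2:ℝ) < Real.exp 1 := lt_trans (by norm_num) Real.exp_one_gt_d9
        have h3 : 1 / Real.exp 1 < 1 / 2 :=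
          one_div_lt_one_div_of_lt (by norm_num) h2
        rw [Real.exp_neg, ← one_div]
        exact h3
      linarith
    set t : ℝ := 1 - hh with htdef
    have htIcc : t ∈ Set.Icc (-1:ℝ) 1 := by
      constructor <;> [linarith; linarith]
    have hmax' := hmax htIcc
    simp only [bahH, mem_setOf_eq] at hmax'
    rw [h] at hmax'
    -- hmax' : β * t^p - bahI t ≤ β * 1^p - bahI 1
    have bern : 1 - (p:ℝ) * hh ≤ t ^ p := by
      have := one_add_mul_le_pow (show (-2:ℝ) ≤ -hh by linarith) p
      have e : (1 + -hh) = t := by rw [htdef]; ring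
      rw [e] at this
      linarith [this]
    have hlog32 : (0:ℝ) < Real.log (3/2) := Real.log_pos (by norm_num)
    have l1 : Real.log (2 - hh) ≤ Real.log 2 := Real.log_le_log (by linarith) (by linarith)
    have l2 : Real.log (3/2) ≤ Real.log (2 - hh) := Real.log_le_log (by norm_num) (by linarith)
    have l3 : Real.log hh = -(2 * β * p + 1) := Real.log_exp _
    have hbI : bahI t = ((2 - hh) * Real.log (2 - hh) + hh * Real.log hh) / 2 := by
      have e : (1:ℝ) + (1 - hh) = 2 - hh := by ring
      have e' : (1:ℝ) - (1 - hh) = hh := by ring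
      rw [bahI, htdef, e, e']
    have hbIle : bahI t ≤ Real.log 2 - hh/2 * (Real.log (3/2) + 2 * β * p + 1) := by
      rw [hbI, l3]
      nlinarith
    have contra : β * 1 ^ p - bahI 1 < β * t ^ p - bahI t := by
      rw [bahI_one, one_pow]
      have b1 : β * (1 - (p:ℝ) * hh) ≤ β * t ^ p :=
        mul_le_mul_of_nonneg_left bern hβpos.le
      nlinarith
    linarith
  -- Step 3 : claim 1
  have claim1 : bahH β₀ p m < 0 := by
    have := houter m hmIcc (by rw [abs_of_pos hm0]; linarith)
    linarith
  refine ⟨claim1, ?_, ?_⟩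
  -- Step 4 : claim 2
  · set S2 := {t ∈ Set.Icc (-1:ℝ) 1 | β < etaFn p t} with hS2
    have hA_le : ∀ y ∈ bahH β₀ p '' S2, y ≤ 0 := by
      rintro y ⟨t, ⟨htI, htη⟩, rfl⟩
      rcases le_or_gt |t| δ with hc1 | hc1
      · exact hinner t hc1
      rcases le_or_gt |t| ε with hc2 | hc2
      · exact absurd (hmid t hc1.le hc2) (by linarith)
      · linarith [houter t htI hc2.le]
    have hbdd : BddAbove (bahH β₀ p '' S2) := ⟨0, fun y hy => hA_le y hy⟩
    -- small positive points are in S2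
    have hsmall : ∀ t : ℝ, 0 < t → t ≤ 1/2 → t ≤ 1/((β+1)*p) → β < etaFn p t := by
      intro t h0t h1t h2t
      have ht0 : t ≠ 0 := h0t.ne'
      rw [eta_repr p hp1 t ht0, ← hk]
      have harc : t ≤ arctanh t := bah_arctanh_ge t ⟨h0t.le, by linarith⟩
      have htk : t ^ k ≤ t ^ 2 := pow_le_pow_of_le_one h0t.le (by linarith) hk2
      have htkpos : 0 < t ^ k := pow_pos h0t k
      have key : β + 1 ≤ (p:ℝ)⁻¹ * (t ^ k)⁻¹ * t := by
        have e : (p:ℝ)⁻¹ * (t ^ k)⁻¹ * t = t / ((p:ℝ) * t ^ k) := by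
          field_simp
        rw [e, le_div_iff₀ (by positivity)]
        have e2 : t * ((β+1) * (p:ℝ)) ≤ 1 := by
          have hbp : (0:ℝ) < (β+1) * p := by positivity
          calc t * ((β+1) * (p:ℝ)) ≤ (1/((β+1)*p)) * ((β+1) * (p:ℝ)) := by
                apply mul_le_mul_of_nonneg_right h2t hbp.le
          _ = 1 := by field_simp
        nlinarith [mul_le_mul_of_nonneg_left htk (show (0:ℝ) ≤ (β+1)*p by positivity)]
      have step : (p:ℝ)⁻¹ * (t ^ k)⁻¹ * t ≤ (p:ℝ)⁻¹ * (t ^ k)⁻¹ * arctanh t := by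
        apply mul_le_mul_of_nonneg_left harc (by positivity)
      linarith
    have hne : (bahH β₀ p '' S2).Nonempty := by
      set t₁ : ℝ := min (1/2) (1/((β+1)*p)) with ht₁def
      have h0t₁ : 0 < t₁ := lt_min (by norm_num) (by positivity)
      refine ⟨bahH β₀ p t₁, ⟨t₁, ⟨⟨by linarith [min_le_left (1/2:ℝ) (1/((β+1)*p))],
        by linarith [min_le_left (1/2:ℝ) (1/((β+1)*p))]⟩, ?_⟩, rfl⟩⟩
      exact hsmall t₁ h0t₁ (min_le_left _ _) (min_le_right _ _)
    apply le_antisymm (csSup_le hne hA_le)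
    by_contra hcon
    push_neg at hcon
    set s : ℝ := sSup (bahH β₀ p '' S2) with hsdef
    have hs0 : s < 0 := hcon
    set t₂ : ℝ := min (min (1/2) (1/((β+1)*p))) (-s/2) with ht₂def
    have h0t₂ : 0 < t₂ := lt_min (lt_min (by norm_num) (by positivity)) (by linarith)
    have ht₂half : t₂ ≤ 1/2 := le_trans (min_le_left _ _) (min_le_left _ _)
    have ht₂mem : t₂ ∈ S2 := by
      refine ⟨⟨by linarith, by linarith⟩, ?_⟩
      exact hsmall t₂ h0t₂ ht₂half (le_trans (min_le_left _ _) (min_le_right _ _))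
    have hmem : bahH β₀ p t₂ ∈ bahH β₀ p '' S2 := ⟨t₂, ht₂mem, rfl⟩
    have hle := le_csSup hbdd hmem
    have hlow : -t₂ ≤ bahH β₀ p t₂ := by
      have i1 : bahI t₂ ≤ t₂ := bahI_le_self t₂ h0t₂.le (by linarith)
      have i2 : 0 ≤ β₀ * t₂ ^ p := by positivity
      rw [bahH]; linarith
    have : t₂ ≤ -s/2 := min_le_right _ _
    linarith
  -- Step 5 : claim 3
  · have hne3 : (bahH β₀ p '' Set.Ioc m 1).Nonempty :=
      ⟨bahH β₀ p 1, ⟨1, ⟨hm1, le_refl 1⟩, rfl⟩⟩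
    have hub : ∀ y ∈ bahH β₀ p '' Set.Ioc m 1, y ≤ β₀ - c := by
      rintro y ⟨t, ht, rfl⟩
      have h0t : 0 < t := lt_trans (lt_trans hε0 hmε) ht.1
      apply houter t ⟨by linarith, ht.2⟩
      rw [abs_of_pos h0t]
      linarith [ht.1]
    calc sSup (bahH β₀ p '' Set.Ioc m 1) ≤ β₀ - c := csSup_le hne3 hub
    _ < 0 := houtneg
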